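/- Let S be a real f×L matrix (f ≤ L) such that S Sᵀ is invertible, and let qᵢ, qⱼ ∈ ℝ^f be two column vectors with least-norm coefficient vectors cᵢ = Sᵀ(S Sᵀ)⁻¹ qᵢ and cⱼ = Sᵀ(S Sᵀ)⁻¹ qⱼ. Then det([S,qᵢ][S,qᵢ]ᵀ) ≤ det([S,qⱼ][S,qⱼ]ᵀ) if and only if ‖cᵢ‖₂ ≤ ‖cⱼ‖₂; in particular, among candidate columns, maximizing the rectangular volume of the extended matrix [S, q] is equivalent to maximizing the Euclidean norm of the least-norm coefficient vector of q. -/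

import Mathlib

open Matrix

/-- Maximizing the rectangular volume of the extended matrix `[S, q]` over
candidate columns `q` is equivalent to maximizing the Euclidean norm of the
least-norm coefficient vector `c = Sᵀ (S Sᵀ)⁻¹ q`. -/
theorem det_append_le_iff_norm_coef_le
    (f L : ℕ) (hfL : f ≤ L) (S : Matrix (Fin f) (Fin L) ℝ) (hinv : IsUnit (S * Sᵀ))
    (qi qj : Fin f → ℝ)
    (ci cj : Fin L → ℝ)
    (hci : ci = (Sᵀ * (S * Sᵀ)⁻¹).mulVec qi)
    (hcj : cj = (Sᵀ * (S * Sᵀ)⁻¹).mulVec qj)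
    (Ti Tj : Matrix (Fin f) (Fin (L + 1)) ℝ)
    (hTi : Ti = Matrix.of fun a b => Fin.lastCases (qi a) (fun j => S a j) b)
    (hTj : Tj = Matrix.of fun a b => Fin.lastCases (qj a) (fun j => S a j) b) :
    (Ti * Tiᵀ).det ≤ (Tj * Tjᵀ).det ↔
      Real.sqrt (∑ a, ci a ^ 2) ≤ Real.sqrt (∑ a, cj a ^ 2) := by
  subst hci hcj hTi hTj
  set M := S * Sᵀ with hM
  have hdet : IsUnit M.det := (Matrix.isUnit_iff_isUnit_det M).mp hinv
  have hMsym : Mᵀ = M := by rw [hM, Matrix.transpose_mul, Matrix.transpose_transpose]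
  have hMinvsym : M⁻¹ᵀ = M⁻¹ := by rw [Matrix.transpose_nonsing_inv, hMsym]
  have hAA : (Sᵀ * M⁻¹)ᵀ * (Sᵀ * M⁻¹) = M⁻¹ := by
    rw [Matrix.transpose_mul, Matrix.transpose_transpose, hMinvsym,
      Matrix.mul_assoc, ← Matrix.mul_assoc S, ← hM,
      Matrix.mul_nonsing_inv M hdet, Matrix.mul_one]
  -- the squared norm of the coefficient vector
  have hc : ∀ q : Fin f → ℝ,
      ∑ a, ((Sᵀ * M⁻¹).mulVec q) a ^ 2 = q ⬝ᵥ (M⁻¹ *ᵥ q) := by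
    intro q
    have h1 : ∑ a, ((Sᵀ * M⁻¹).mulVec q) a ^ 2
        = ((Sᵀ * M⁻¹) *ᵥ q) ⬝ᵥ ((Sᵀ * M⁻¹) *ᵥ q) := by
      simp [dotProduct, sq]
    rw [h1, Matrix.dotProduct_mulVec, Matrix.vecMul_mulVec, hAA,
      ← Matrix.dotProduct_mulVec]
  -- determinant of the extended Gram matrix
  have key : ∀ q : Fin f → ℝ,
      ((Matrix.of fun a b => Fin.lastCases (q a) (fun j => S a j) b : Matrix (Fin f) (Fin (L+1)) ℝ) *
        (Matrix.of fun a b => Fin.lastCases (q a) (fun j => S a j) b : Matrix (Fin f) (Fin (L+1)) ℝ)ᵀ).det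
      = M.det * (1 + q ⬝ᵥ (M⁻¹ *ᵥ q)) := by
    intro q
    have hT : (Matrix.of fun a b => Fin.lastCases (q a) (fun j => S a j) b : Matrix (Fin f) (Fin (L+1)) ℝ) *
        (Matrix.of fun a b => Fin.lastCases (q a) (fun j => S a j) b : Matrix (Fin f) (Fin (L+1)) ℝ)ᵀ
        = M + Matrix.replicateCol Unit q * Matrix.replicateRow Unit q := by
      ext a b
      simp [Matrix.mul_apply, Fin.sum_univ_castSucc, hM, mul_comm]
    rw [hT, Matrix.det_add_replicateCol_mul_replicateRow hdet]
    congr 1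
    rw [Matrix.det_unique]
    simp [Matrix.mul_apply, dotProduct, Matrix.mulVec, Finset.mul_sum, Finset.sum_mul]
    rw [Finset.sum_comm]
    exact Finset.sum_congr rfl fun x _ => Finset.sum_congr rfl fun y _ => by ring
  -- positivity of det M
  have hpsd : M.PosSemidef := by
    have := Matrix.posSemidef_self_mul_conjTranspose S
    simpa [Matrix.conjTranspose_eq_transpose_of_trivial, hM] using this
  have hdetpos : 0 < M.det := by
    rcases lt_or_eq_of_le hpsd.isHermitian.det_eq_prod_eigenvalues.symm.le with _ | _
    · have hnonneg : 0 ≤ M.det := by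
        rw [hpsd.isHermitian.det_eq_prod_eigenvalues]
        exact Finset.prod_nonneg fun i _ => by exact_mod_cast hpsd.eigenvalues_nonneg i
      exact lt_of_le_of_ne hnonneg (Ne.symm hdet.ne_zero)
    · have hnonneg : 0 ≤ M.det := by
        rw [hpsd.isHermitian.det_eq_prod_eigenvalues]
        exact Finset.prod_nonneg fun i _ => by exact_mod_cast hpsd.eigenvalues_nonneg i
      exact lt_of_le_of_ne hnonneg (Ne.symm hdet.ne_zero)
  have hnj : (0:ℝ) ≤ ∑ a, ((Sᵀ * M⁻¹).mulVec qj) a ^ 2 :=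
    Finset.sum_nonneg fun a _ => sq_nonneg _
  rw [key qi, key qj, ← hc qi, ← hc qj,
    Real.sqrt_le_sqrt_iff hnj, mul_le_mul_iff_right₀ hdetpos, add_le_add_iff_left]
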